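/- With the notation of the previous statement, the level-2 rate functional satisfies the upper bound I_2(μ) ≤ I_2^S(μ) + ∑_{x≠y} [c_s(x→y) − √(c_s(x→y)² − c_a(x→y)²)] · √(μ(x)μ(y)/(π(x)π(y))) · π(x). In particular, for finite-state Markov chains the acceleration of convergence obtainable by breaking detailed balance is bounded. -/

import Mathlib

open Finset

private lemma amgm_key (ws wa a b t : ℝ) (hws : 0 ≤ ws) (hw : wa^2 ≤ ws^2)
    (ha : 0 ≤ a) (hb : 0 ≤ b) (ht : 0 < t) :
    (ws+wa)*a^2*(1-t) + (ws-wa)*b^2*(1-t⁻¹)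
      ≤ ws*(a^2+b^2) + wa*(a^2-b^2) - 2*Real.sqrt (ws^2-wa^2)*a*b := by
  have h1 : 0 ≤ ws + wa := by nlinarith
  have h2 : 0 ≤ ws - wa := by nlinarith
  have hA0 : 0 ≤ (ws+wa)*a^2*t := by positivity
  have hB0 : 0 ≤ (ws-wa)*b^2*t⁻¹ := by positivity
  have hr0 : 0 ≤ Real.sqrt (ws^2-wa^2) := Real.sqrt_nonneg _
  have hr2 : Real.sqrt (ws^2-wa^2)^2 = ws^2 - wa^2 := Real.sq_sqrt (by linarith)
  have ht' : t * t⁻¹ = 1 := mul_inv_cancel₀ ht.ne'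
  have hAB : ((ws+wa)*a^2*t) * ((ws-wa)*b^2*t⁻¹) = (Real.sqrt (ws^2-wa^2)*a*b)^2 := by
    linear_combination (ws^2-wa^2)*a^2*b^2*ht' - a^2*b^2*hr2
  have key : 2*(Real.sqrt (ws^2-wa^2)*a*b) ≤ (ws+wa)*a^2*t + (ws-wa)*b^2*t⁻¹ := by
    have hs : Real.sqrt ((ws+wa)*a^2*t) * Real.sqrt ((ws-wa)*b^2*t⁻¹)
        = Real.sqrt (ws^2-wa^2)*a*b := by
      rw [← Real.sqrt_mul hA0, hAB, Real.sqrt_sq (by positivity)]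
    nlinarith [sq_nonneg (Real.sqrt ((ws+wa)*a^2*t) - Real.sqrt ((ws-wa)*b^2*t⁻¹)),
      Real.sq_sqrt hA0, Real.sq_sqrt hB0, hs]
  have expand : (ws+wa)*a^2*(1-t) + (ws-wa)*b^2*(1-t⁻¹)
      = ws*(a^2+b^2) + wa*(a^2-b^2) - ((ws+wa)*a^2*t + (ws-wa)*b^2*t⁻¹) := by
    ring
  linarith

private lemma sum_offDiag_of_diag_zero {Ω : Type*} [Fintype Ω] [DecidableEq Ω]
    (F : Ω → Ω → ℝ) (hF : ∀ x, F x x = 0) :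
    ∑ x, ∑ y, F x y = ∑ p ∈ Finset.univ.offDiag, F p.1 p.2 := by
  rw [← Finset.sum_product', ← Finset.diag_union_offDiag (Finset.univ : Finset Ω),
    Finset.sum_union (Finset.disjoint_diag_offDiag _), Finset.sum_diag]
  simp [hF]

private lemma sum_offDiag_swap {Ω : Type*} [Fintype Ω] [DecidableEq Ω]
    (F : Ω → Ω → ℝ) :
    ∑ p ∈ Finset.univ.offDiag, F p.2 p.1 = ∑ p ∈ Finset.univ.offDiag, F p.1 p.2 := by
  apply Finset.sum_nbij' (fun p => Prod.swap p) (fun p => Prod.swap p) <;>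
    simp [Finset.mem_offDiag, eq_comm]


/-- Upper bound on the level-2 rate functional:
`I_2(μ) ≤ I_2^S(μ) + ∑_{x≠y} [c_s(x→y) − √(c_s(x→y)² − c_a(x→y)²)] √(μ(x)μ(y)/(π(x)π(y))) π(x)`,
so for finite-state Markov chains the acceleration obtainable by breaking detailed
balance is bounded. -/
theorem level2_rate_function_upper_bound
    {Ω : Type*} [Fintype Ω] [DecidableEq Ω] [Nonempty Ω]
    (c : Ω → Ω → ℝ) (π : Ω → ℝ)
    (hc : ∀ x y, x ≠ y → 0 ≤ c x y)
    (hπpos : ∀ x, 0 < π x) (hπsum : ∑ x, π x = 1)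
    (hinv : ∀ f : Ω → ℝ, ∑ x, π x * (∑ y, c x y * (f y - f x)) = 0)
    (hirr : ∀ x y : Ω, x ≠ y → ∃ (k : ℕ) (p : Fin (k + 1) → Ω),
      p 0 = x ∧ p (Fin.last k) = y ∧ ∀ i : Fin k, 0 < c (p i.castSucc) (p i.succ))
    (cs ca : Ω → Ω → ℝ)
    (hcs : ∀ x y, cs x y = (c x y + π y * c y x / π x) / 2)
    (hca : ∀ x y, ca x y = c x y - cs x y)
    (μ : Ω → ℝ) (hμ : ∀ x, 0 ≤ μ x) (hμsum : ∑ x, μ x = 1) :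
    (⨆ f : {f : Ω → ℝ // ∀ x, 0 < f x},
        ∑ x, μ x * ((f.1 x)⁻¹ * (-(∑ y, c x y * (f.1 y - f.1 x)))))
    ≤ (∑ x, Real.sqrt (μ x / π x)
          * (-(∑ y, cs x y * (Real.sqrt (μ y / π y) - Real.sqrt (μ x / π x)))) * π x)
      + ∑ p ∈ Finset.univ.offDiag,
          (cs p.1 p.2 - Real.sqrt (cs p.1 p.2 ^ 2 - ca p.1 p.2 ^ 2))
            * Real.sqrt (μ p.1 / π p.1 * (μ p.2 / π p.2)) * π p.1 := by
  set g : Ω → ℝ := fun x => Real.sqrt (μ x / π x) with hgdef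
  have hg0 : ∀ x, 0 ≤ g x := fun x => Real.sqrt_nonneg _
  have hgsq : ∀ x, g x ^ 2 = μ x / π x := fun x =>
    Real.sq_sqrt (div_nonneg (hμ x) (hπpos x).le)
  have hμeq : ∀ x, μ x = π x * g x ^ 2 := by
    intro x; rw [hgsq, eq_comm, mul_comm]
    exact div_mul_cancel₀ _ (hπpos x).ne'
  have hsym : ∀ x y, π x * cs x y = π y * cs y x := by
    intro x y; rw [hcs x y, hcs y x]
    field_simp [(hπpos x).ne', (hπpos y).ne']
    ring
  have hca' : ∀ x y, π x * ca x y = -(π y * ca y x) := by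
    intro x y; rw [hca x y, hca y x, hcs x y, hcs y x]
    field_simp [(hπpos x).ne', (hπpos y).ne']
    ring
  have hAB : ∀ x y, x ≠ y → 0 ≤ cs x y - ca x y ∧ 0 ≤ cs x y + ca x y := by
    intro x y hxy
    have h1 : cs x y + ca x y = c x y := by rw [hca]; ring
    have h2 : cs x y - ca x y = π y * c y x / π x := by rw [hca, hcs]; ring
    refine ⟨?_, ?_⟩
    · rw [h2]
      exact div_nonneg (mul_nonneg (hπpos y).le (hc y x hxy.symm)) (hπpos x).le
    · rw [h1]; exact hc x y hxy
  have hcs_nn : ∀ x y, x ≠ y → 0 ≤ cs x y := by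
    intro x y hxy; obtain ⟨h1, h2⟩ := hAB x y hxy; linarith
  have hca_sq : ∀ x y, x ≠ y → (ca x y)^2 ≤ (cs x y)^2 := by
    intro x y hxy; obtain ⟨h1, h2⟩ := hAB x y hxy
    nlinarith [mul_nonneg h1 h2]
  have hR1 : ∀ x y, x ≠ y → Real.sqrt (cs x y^2 - ca x y^2) * π x
      = Real.sqrt ((π x * cs x y)^2 - (π x * ca x y)^2) := by
    intro x y hxy
    rw [show (π x * cs x y)^2 - (π x * ca x y)^2 = (cs x y^2 - ca x y^2) * (π x)^2 by ring,
      Real.sqrt_mul (by nlinarith [hca_sq x y hxy]), Real.sqrt_sq (hπpos x).le]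
  have hR2 : ∀ x y, x ≠ y → Real.sqrt (cs y x^2 - ca y x^2) * π y
      = Real.sqrt ((π x * cs x y)^2 - (π x * ca x y)^2) := by
    intro x y hxy
    have e1 : (π x * cs x y)^2 = (π y * cs y x)^2 := by rw [hsym x y]
    have e2 : (π x * ca x y)^2 = (π y * ca y x)^2 := by rw [hca' x y]; ring
    rw [show (π x * cs x y)^2 - (π x * ca x y)^2 = (cs y x^2 - ca y x^2) * (π y)^2 by
        rw [e1, e2]; ring,
      Real.sqrt_mul (by nlinarith [hca_sq y x hxy.symm]), Real.sqrt_sq (hπpos y).le]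
  have hWa : ∑ p ∈ Finset.univ.offDiag, π p.1 * (ca p.1 p.2 * (g p.2^2 - g p.1^2)) = 0 := by
    have h0 : ∑ p ∈ Finset.univ.offDiag, π p.1 * (c p.1 p.2 * (g p.2^2 - g p.1^2)) = 0 := by
      rw [← sum_offDiag_of_diag_zero (fun x y => π x * (c x y * (g y^2 - g x^2)))
        (by intro x; ring)]
      have := hinv (fun x => g x ^ 2)
      simpa [Finset.mul_sum] using this
    have hWs : ∑ p ∈ Finset.univ.offDiag, π p.1 * (cs p.1 p.2 * (g p.2^2 - g p.1^2)) = 0 := by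
      have hsw := sum_offDiag_swap (fun x y => π x * (cs x y * (g y^2 - g x^2)))
      have hneg : ∑ p ∈ Finset.univ.offDiag, π p.2 * (cs p.2 p.1 * (g p.1^2 - g p.2^2))
          = ∑ p ∈ Finset.univ.offDiag, -(π p.1 * (cs p.1 p.2 * (g p.2^2 - g p.1^2))) := by
        refine Finset.sum_congr rfl fun p _ => ?_
        linear_combination (g p.1^2 - g p.2^2) * hsym p.2 p.1
      rw [hneg, Finset.sum_neg_distrib] at hsw
      linarith
    have hsplit : ∑ p ∈ Finset.univ.offDiag, π p.1 * (c p.1 p.2 * (g p.2^2 - g p.1^2))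
        = (∑ p ∈ Finset.univ.offDiag, π p.1 * (cs p.1 p.2 * (g p.2^2 - g p.1^2)))
          + ∑ p ∈ Finset.univ.offDiag, π p.1 * (ca p.1 p.2 * (g p.2^2 - g p.1^2)) := by
      rw [← Finset.sum_add_distrib]
      refine Finset.sum_congr rfl fun p _ => ?_
      rw [hca p.1 p.2]; ring
    linarith [hsplit ▸ h0, hWs, h0]
  have hScancel : ∑ p ∈ Finset.univ.offDiag,
      π p.1 * ca p.1 p.2 * (g p.1^2 - g p.2^2) / 2 = 0 := by
    have h : ∑ p ∈ Finset.univ.offDiag, π p.1 * ca p.1 p.2 * (g p.1^2 - g p.2^2) / 2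
        = ∑ p ∈ Finset.univ.offDiag, -(π p.1 * (ca p.1 p.2 * (g p.2^2 - g p.1^2))) / 2 := by
      refine Finset.sum_congr rfl fun p _ => ?_; ring
    rw [h, ← Finset.sum_div, Finset.sum_neg_distrib, hWa]
    norm_num
  have hBg : ∀ x y : Ω, Real.sqrt (μ x / π x * (μ y / π y)) = g x * g y := fun x y =>
    Real.sqrt_mul (div_nonneg (hμ x) (hπpos x).le) _
  have hB1 : (∑ x, g x * (-(∑ y, cs x y * (g y - g x))) * π x)
      = ∑ p ∈ Finset.univ.offDiag, g p.1 * π p.1 * (cs p.1 p.2 * (g p.1 - g p.2)) := by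
    rw [← sum_offDiag_of_diag_zero (fun x y => g x * π x * (cs x y * (g x - g y)))
      (by intro x; ring)]
    refine Finset.sum_congr rfl fun x _ => ?_
    simp only [← Finset.sum_neg_distrib, Finset.mul_sum, Finset.sum_mul]
    exact Finset.sum_congr rfl fun y _ => by ring
  haveI hne : Nonempty {f : Ω → ℝ // ∀ x, 0 < f x} := ⟨⟨fun _ => 1, fun _ => one_pos⟩⟩
  apply ciSup_le
  rintro ⟨f, hf⟩
  dsimp only
  have hL : (∑ x, μ x * ((f x)⁻¹ * (-(∑ y, c x y * (f y - f x)))))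
      = ∑ p ∈ Finset.univ.offDiag, μ p.1 * ((f p.1)⁻¹ * (c p.1 p.2 * (f p.1 - f p.2))) := by
    rw [← sum_offDiag_of_diag_zero (fun x y => μ x * ((f x)⁻¹ * (c x y * (f x - f y))))
      (by intro x; simp)]
    refine Finset.sum_congr rfl fun x _ => ?_
    simp only [← Finset.sum_neg_distrib, Finset.mul_sum]
    exact Finset.sum_congr rfl fun y _ => by ring
  rw [hL, hB1]
  rw [show ∑ p ∈ Finset.univ.offDiag,
        (cs p.1 p.2 - Real.sqrt (cs p.1 p.2 ^ 2 - ca p.1 p.2 ^ 2))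
          * Real.sqrt (μ p.1 / π p.1 * (μ p.2 / π p.2)) * π p.1
      = ∑ p ∈ Finset.univ.offDiag,
        (cs p.1 p.2 - Real.sqrt (cs p.1 p.2 ^ 2 - ca p.1 p.2 ^ 2)) * (g p.1 * g p.2) * π p.1
      from Finset.sum_congr rfl fun p _ => by rw [hBg p.1 p.2]]
  -- per-pair inequality
  have pair : ∀ x y : Ω, x ≠ y →
      μ x * ((f x)⁻¹ * (c x y * (f x - f y))) + μ y * ((f y)⁻¹ * (c y x * (f y - f x)))
      ≤ (g x * π x * (cs x y * (g x - g y))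
          + (cs x y - Real.sqrt (cs x y ^ 2 - ca x y ^ 2)) * (g x * g y) * π x
          + π x * ca x y * (g x^2 - g y^2) / 2)
        + (g y * π y * (cs y x * (g y - g x))
          + (cs y x - Real.sqrt (cs y x ^ 2 - ca y x ^ 2)) * (g y * g x) * π y
          + π y * ca y x * (g y^2 - g x^2) / 2) := by
    intro x y hxy
    have hfx := hf x
    have hfy := hf y
    have ht : 0 < f y / f x := div_pos hfy hfx
    have hT1 : μ x * ((f x)⁻¹ * (c x y * (f x - f y)))
        = (π x * cs x y + π x * ca x y) * g x ^2 * (1 - f y / f x) := by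
      rw [hμeq x, hca x y]
      field_simp
      ring
    have h3 : π y * c y x = π x * cs x y - π x * ca x y := by
      have hcyx : c y x = cs y x + ca y x := by rw [hca y x]; ring
      rw [hcyx, mul_add, ← hsym x y]
      linarith [hca' x y]
    have hT2 : μ y * ((f y)⁻¹ * (c y x * (f y - f x)))
        = (π x * cs x y - π x * ca x y) * g y ^2 * (1 - (f y / f x)⁻¹) := by
      rw [hμeq y, ← h3, inv_div]
      field_simp
    have hws : 0 ≤ π x * cs x y := mul_nonneg (hπpos x).le (hcs_nn x y hxy)
    have hw : (π x * ca x y)^2 ≤ (π x * cs x y)^2 := by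
      nlinarith [mul_le_mul_of_nonneg_left (hca_sq x y hxy) (sq_nonneg (π x))]
    have key := amgm_key (π x * cs x y) (π x * ca x y) (g x) (g y) (f y / f x)
      hws hw (hg0 x) (hg0 y) ht
    have e1 : π y * cs y x = π x * cs x y := (hsym x y).symm
    have e2 : π y * ca y x = -(π x * ca x y) := by linarith [hca' x y]
    have hRHS : (g x * π x * (cs x y * (g x - g y))
          + (cs x y - Real.sqrt (cs x y ^ 2 - ca x y ^ 2)) * (g x * g y) * π x
          + π x * ca x y * (g x^2 - g y^2) / 2)
        + (g y * π y * (cs y x * (g y - g x))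
          + (cs y x - Real.sqrt (cs y x ^ 2 - ca y x ^ 2)) * (g y * g x) * π y
          + π y * ca y x * (g y^2 - g x^2) / 2)
        = (π x * cs x y)*(g x^2 + g y^2) + (π x * ca x y)*(g x^2 - g y^2)
          - 2*Real.sqrt ((π x * cs x y)^2 - (π x * ca x y)^2)*(g x)*(g y) := by
      linear_combination (g y * (g y - g x) + g y * g x) * e1 + ((g y^2 - g x^2)/2) * e2
        - (g x * g y) * hR1 x y hxy - (g y * g x) * hR2 x y hxy
    rw [hT1, hT2, hRHS]
    linarith [key]
  have hdouble : ∀ (F : Ω → Ω → ℝ), 2 * ∑ p ∈ Finset.univ.offDiag, F p.1 p.2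
      = ∑ p ∈ Finset.univ.offDiag, (F p.1 p.2 + F p.2 p.1) := by
    intro F
    rw [Finset.sum_add_distrib, sum_offDiag_swap F]
    ring
  have hdT : 2 * ∑ p ∈ Finset.univ.offDiag, μ p.1 * ((f p.1)⁻¹ * (c p.1 p.2 * (f p.1 - f p.2)))
      = ∑ p ∈ Finset.univ.offDiag, (μ p.1 * ((f p.1)⁻¹ * (c p.1 p.2 * (f p.1 - f p.2)))
          + μ p.2 * ((f p.2)⁻¹ * (c p.2 p.1 * (f p.2 - f p.1)))) :=
    hdouble (fun x y => μ x * ((f x)⁻¹ * (c x y * (f x - f y))))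
  have hdS : 2 * ∑ p ∈ Finset.univ.offDiag,
        (g p.1 * π p.1 * (cs p.1 p.2 * (g p.1 - g p.2))
          + (cs p.1 p.2 - Real.sqrt (cs p.1 p.2 ^ 2 - ca p.1 p.2 ^ 2)) * (g p.1 * g p.2) * π p.1
          + π p.1 * ca p.1 p.2 * (g p.1^2 - g p.2^2) / 2)
      = ∑ p ∈ Finset.univ.offDiag,
        ((g p.1 * π p.1 * (cs p.1 p.2 * (g p.1 - g p.2))
          + (cs p.1 p.2 - Real.sqrt (cs p.1 p.2 ^ 2 - ca p.1 p.2 ^ 2)) * (g p.1 * g p.2) * π p.1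
          + π p.1 * ca p.1 p.2 * (g p.1^2 - g p.2^2) / 2)
        + (g p.2 * π p.2 * (cs p.2 p.1 * (g p.2 - g p.1))
          + (cs p.2 p.1 - Real.sqrt (cs p.2 p.1 ^ 2 - ca p.2 p.1 ^ 2)) * (g p.2 * g p.1) * π p.2
          + π p.2 * ca p.2 p.1 * (g p.2^2 - g p.1^2) / 2)) :=
    hdouble (fun x y => g x * π x * (cs x y * (g x - g y))
          + (cs x y - Real.sqrt (cs x y ^ 2 - ca x y ^ 2)) * (g x * g y) * π x
          + π x * ca x y * (g x^2 - g y^2) / 2)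
  have hTS : ∑ p ∈ Finset.univ.offDiag, (μ p.1 * ((f p.1)⁻¹ * (c p.1 p.2 * (f p.1 - f p.2)))
          + μ p.2 * ((f p.2)⁻¹ * (c p.2 p.1 * (f p.2 - f p.1))))
      ≤ ∑ p ∈ Finset.univ.offDiag,
        ((g p.1 * π p.1 * (cs p.1 p.2 * (g p.1 - g p.2))
          + (cs p.1 p.2 - Real.sqrt (cs p.1 p.2 ^ 2 - ca p.1 p.2 ^ 2)) * (g p.1 * g p.2) * π p.1
          + π p.1 * ca p.1 p.2 * (g p.1^2 - g p.2^2) / 2)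
        + (g p.2 * π p.2 * (cs p.2 p.1 * (g p.2 - g p.1))
          + (cs p.2 p.1 - Real.sqrt (cs p.2 p.1 ^ 2 - ca p.2 p.1 ^ 2)) * (g p.2 * g p.1) * π p.2
          + π p.2 * ca p.2 p.1 * (g p.2^2 - g p.1^2) / 2)) :=
    Finset.sum_le_sum fun p hp => pair p.1 p.2 (Finset.mem_offDiag.1 hp).2.2
  have hSsplit : ∑ p ∈ Finset.univ.offDiag,
        (g p.1 * π p.1 * (cs p.1 p.2 * (g p.1 - g p.2))
          + (cs p.1 p.2 - Real.sqrt (cs p.1 p.2 ^ 2 - ca p.1 p.2 ^ 2)) * (g p.1 * g p.2) * π p.1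
          + π p.1 * ca p.1 p.2 * (g p.1^2 - g p.2^2) / 2)
      = (∑ p ∈ Finset.univ.offDiag, g p.1 * π p.1 * (cs p.1 p.2 * (g p.1 - g p.2)))
        + (∑ p ∈ Finset.univ.offDiag,
            (cs p.1 p.2 - Real.sqrt (cs p.1 p.2 ^ 2 - ca p.1 p.2 ^ 2)) * (g p.1 * g p.2) * π p.1)
        + ∑ p ∈ Finset.univ.offDiag, π p.1 * ca p.1 p.2 * (g p.1^2 - g p.2^2) / 2 := by
    rw [Finset.sum_add_distrib, Finset.sum_add_distrib]
  linarith [hdT, hdS, hTS, hSsplit, hScancel]
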